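/- Let L = F_{2^l}, q = 2^k with gcd(k,l) = 1. For each r ∈ L \ F_2, there is a unique h ∈ L \ F_2 with h^{q-1} = 1 + 1/r; equivalently r = h/(h + h^q). Moreover, with b = r^{q+1} + r, one has b = h^{q^2+1}/(h^q + h)^{q+1}. -/

import Mathlib

/-- `2^k - 1` and `2^l - 1` are coprime when `gcd k l = 1`. -/
lemma coprime_two_pow_sub_one {k l : ℕ} (hk : 0 < k) (hgcd : Nat.gcd k l = 1) :
    Nat.Coprime (2 ^ k - 1) (2 ^ l - 1) := by
  set d := Nat.gcd (2 ^ k - 1) (2 ^ l - 1) with hd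
  rcases Nat.eq_zero_or_pos d with h0 | hpos
  · exfalso
    have h1 : 2 ^ k - 1 = 0 := Nat.eq_zero_of_gcd_eq_zero_left (hd ▸ h0)
    have : (2:ℕ) ^ k ≥ 2 ^ 1 := Nat.pow_le_pow_right (by norm_num) hk
    omega
  · show d = 1
    have hdk : d ∣ 2 ^ k - 1 := Nat.gcd_dvd_left _ _
    have hdl : d ∣ 2 ^ l - 1 := Nat.gcd_dvd_right _ _
    haveI : NeZero d := ⟨hpos.ne'⟩
    have key : ∀ m : ℕ, d ∣ 2 ^ m - 1 → (2 : ZMod d) ^ m = 1 := by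
      intro m hm
      have h1 : ((2 ^ m - 1 : ℕ) : ZMod d) = 0 := (ZMod.natCast_eq_zero_iff _ _).mpr hm
      have h2 : (1:ℕ) ≤ 2 ^ m := Nat.one_le_two_pow
      have : ((2 ^ m : ℕ) : ZMod d) - ((1:ℕ) : ZMod d) = 0 := by
        rw [← Nat.cast_sub h2]; exact h1
      have : ((2 ^ m : ℕ) : ZMod d) = 1 := by
        rwa [Nat.cast_one, sub_eq_zero] at this
      simpa using this
    have hk' : orderOf (2 : ZMod d) ∣ k := orderOf_dvd_of_pow_eq_one (key k hdk)
    have hl' : orderOf (2 : ZMod d) ∣ l := orderOf_dvd_of_pow_eq_one (key l hdl)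
    have h1 : orderOf (2 : ZMod d) ∣ 1 := by have := Nat.dvd_gcd hk' hl'; rwa [hgcd] at this
    have h2 : (2 : ZMod d) = 1 := orderOf_eq_one_iff.mp (Nat.dvd_one.mp h1)
    have h3 : ((1 : ℕ) : ZMod d) = 0 := by
      push_cast
      linear_combination h2
    have := (ZMod.natCast_eq_zero_iff 1 d).mp h3
    exact Nat.dvd_one.mp this

/-- Let L = F_{2^l}, q = 2^k with gcd(k,l) = 1. For each r ∈ L \ F_2 there is a
unique h ∈ L \ F_2 with h^{q-1} = 1 + 1/r; equivalently r = h/(h+h^q). Moreover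
b = r^{q+1} + r satisfies b = h^{q²+1}/(h^q+h)^{q+1}. -/
theorem unique_h_for_r (k l : ℕ) (hk : 0 < k) (hl : 0 < l) (hgcd : Nat.gcd k l = 1)
    (L : Type) [Field L] [Fintype L] (hcard : Fintype.card L = 2 ^ l)
    (r : L) (hr0 : r ≠ 0) (hr1 : r ≠ 1) :
    (∃! h : L, (h ≠ 0 ∧ h ≠ 1) ∧ h ^ (2 ^ k - 1) = 1 + r⁻¹) ∧
    (∀ h : L, (h ≠ 0 ∧ h ≠ 1) → h ^ (2 ^ k - 1) = 1 + r⁻¹ →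
      r = h / (h + h ^ (2 ^ k)) ∧
      r ^ (2 ^ k + 1) + r =
        h ^ ((2 ^ k) ^ 2 + 1) / (h ^ (2 ^ k) + h) ^ (2 ^ k + 1)) := by
  -- characteristic 2
  haveI : CharP L (ringChar L) := ringChar.charP L
  obtain ⟨n, hp, hcard'⟩ := FiniteField.card L (ringChar L)
  have hchar2 : ringChar L = 2 := by
    have hdvd : ringChar L ∣ 2 ^ l := by
      rw [← hcard, hcard']; exact dvd_pow_self _ (by positivity)
    have : ringChar L ∣ 2 := hp.dvd_of_dvd_pow hdvd
    exact (Nat.prime_dvd_prime_iff_eq hp Nat.prime_two).mp this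
  haveI : CharP L 2 := hchar2 ▸ (ringChar.charP L)
  haveI : Fact (Nat.Prime 2) := ⟨Nat.prime_two⟩
  classical
  set q := 2 ^ k with hq
  have hq1 : 1 ≤ q := Nat.one_le_two_pow
  have hinv0 : r⁻¹ ≠ 0 := inv_ne_zero hr0
  have hinv1 : r⁻¹ ≠ 1 := fun h => hr1 (by rw [← inv_inv r, h, inv_one])
  have hne : (1 : L) + r⁻¹ ≠ 0 := by
    intro h
    apply hinv1
    have : r⁻¹ = -1 := by linear_combination h
    rw [this]; rw [neg_eq_iff_add_eq_zero]; exact CharTwo.add_self_eq_zero 1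
  -- two's frobenius
  have frob : ∀ x y : L, (x + y) ^ q = x ^ q + y ^ q := fun x y => add_pow_char_pow ..
  -- coprimality for units
  have cop : (Nat.card Lˣ).Coprime (q - 1) := by
    rw [Nat.card_eq_fintype_card, Fintype.card_units, hcard]
    exact (coprime_two_pow_sub_one hk hgcd).symm
  -- helper: any h satisfying the equation is the unique one; also h ≠ 1 automatic
  have key : ∀ h : L, (h ≠ 0 ∧ h ≠ 1) → h ^ (q - 1) = 1 + r⁻¹ →
      r = h / (h + h ^ q) ∧
      r ^ (q + 1) + r = h ^ (q ^ 2 + 1) / (h ^ q + h) ^ (q + 1) := by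
    intro h ⟨hh0, _⟩ heq
    have hpow : h ^ q = (1 + r⁻¹) * h := by
      rw [← heq, ← pow_succ, Nat.sub_add_cancel hq1]
    have hsum : h + h ^ q = r⁻¹ * h := by
      rw [hpow, add_mul, one_mul, ← add_assoc, CharTwo.add_self_eq_zero, zero_add]
    have hsum' : h ^ q + h = r⁻¹ * h := by rw [add_comm]; exact hsum
    have hsn : r⁻¹ * h ≠ 0 := mul_ne_zero hinv0 hh0
    constructor
    · rw [hsum]
      field_simp
    · rw [hsum']
      have hexp : (q - 1) * q + (q + 1) = q ^ 2 + 1 := by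
        obtain ⟨m, hm⟩ : ∃ m, q = 1 + m := ⟨q - 1, by omega⟩
        rw [hm, Nat.add_sub_cancel_left]; ring
      have hbig : h ^ (q ^ 2 + 1) = (1 + (r⁻¹) ^ q) * h ^ (q + 1) := by
        rw [← hexp, pow_add, pow_mul, heq, frob, one_pow]
      rw [hbig, mul_pow]
      rw [inv_pow, inv_pow]
      field_simp
      ring
  refine ⟨?_, key⟩
  -- existence & uniqueness
  have hu : (1 + r⁻¹) ≠ 0 := hne
  set u : Lˣ := Units.mk0 (1 + r⁻¹) hu with hudef
  set h₀ : Lˣ := (powCoprime cop).symm u with hhdef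
  have hpow₀ : (h₀ : L) ^ (q - 1) = 1 + r⁻¹ := by
    have : (powCoprime cop) h₀ = u := Equiv.apply_symm_apply _ _
    have h2 : h₀ ^ (q - 1) = u := this
    calc (h₀ : L) ^ (q - 1) = ((h₀ ^ (q - 1) : Lˣ) : L) := by rw [Units.val_pow_eq_pow_val]
      _ = (u : L) := by rw [h2]
      _ = 1 + r⁻¹ := rfl
  have h₀ne1 : (h₀ : L) ≠ 1 := by
    intro h1
    rw [h1, one_pow] at hpow₀
    exact hinv0 (by linear_combination -hpow₀)
  refine ⟨(h₀ : L), ⟨⟨h₀.ne_zero, h₀ne1⟩, hpow₀⟩, ?_⟩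
  rintro y ⟨⟨hy0, hy1⟩, hyeq⟩
  have hinj := (powCoprime cop).injective
  have : (Units.mk0 y hy0) ^ (q - 1) = h₀ ^ (q - 1) := by
    apply Units.ext
    rw [Units.val_pow_eq_pow_val, Units.val_pow_eq_pow_val]
    simp only [Units.val_mk0]
    rw [hyeq, hpow₀]
  have := hinj (a₁ := Units.mk0 y hy0) (a₂ := h₀) this
  have : ((Units.mk0 y hy0 : Lˣ) : L) = (h₀ : L) := by rw [this]
  simpa using this
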